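/- Let k ≥ 2, q ≥ 3, and r > 2k be integers, and consider the polynomial P(z) := (z+r)^{q+k}(z−q)^k − z^{q+k}(z+q+r)^k. Then P has no multiple complex zero, and P has exactly k zeros in the open half-plane {z ∈ ℂ : Re z > −r/2}. -/

import Mathlib

open Filter Real Complex Polynomial

noncomputable def PP (k q r : ℕ) : Polynomial ℂ :=
  (X + C (r : ℂ)) ^ (q + k) * (X - C (q : ℂ)) ^ k -
        X ^ (q + k) * (X + C ((q : ℂ) + r)) ^ k

lemma evalPP (k q r : ℕ) (z : ℂ) :
    (PP k q r).eval z = (z + r) ^ (q + k) * (z - q) ^ k - z ^ (q + k) * (z + q + r) ^ k := by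
  simp only [PP, eval_sub, eval_mul, eval_pow, eval_add, eval_X, eval_C]
  ring

lemma evalPP_symm (k q r : ℕ) (z : ℂ) :
    (PP k q r).eval (-(r:ℂ) - z) = (-1) ^ (q + 1) * (PP k q r).eval z := by
  rw [evalPP, evalPP]
  have h1 : (-(r:ℂ) - z + r) = -z := by ring
  have h2 : (-(r:ℂ) - z - q) = -(z + q + r) := by ring
  have h3 : (-(r:ℂ) - z + q + r) = -(z - q) := by ring
  have h4 : (-(r:ℂ) - z) = -(z + r) := by ring
  rw [h1, h2, h3, h4]
  rw [show ((-z:ℂ))^(q+k) = (-1)^(q+k) * z^(q+k) from neg_pow _ _,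
      show ((-(z+q+r):ℂ))^k = (-1)^k * (z+q+r)^k from neg_pow _ _,
      show ((-(z+r):ℂ))^(q+k) = (-1)^(q+k) * (z+r)^(q+k) from neg_pow _ _,
      show ((-(z-q):ℂ))^k = (-1)^k * (z-q)^k from neg_pow _ _]
  have key : ((-1:ℂ))^(q+k) * (-1)^k = (-1)^q := by
    rw [pow_add, mul_assoc, ← mul_pow]; norm_num
  have key2 : ((-1:ℂ))^(q+1) = (-1)^q * (-1) := by rw [pow_succ]
  rw [key2]
  linear_combination (z^(q+k)*(z+q+r)^k - (z+r)^(q+k)*(z-q)^k) * key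

lemma evalPP_deriv (k q r : ℕ) (z : ℂ) :
    (derivative (PP k q r)).eval z =
      (q+k) * (z + r) ^ (q + k - 1) * (z - q) ^ k + k * (z + r) ^ (q+k) * (z - q) ^ (k-1)
      - ((q+k) * z ^ (q + k - 1) * (z + q + r) ^ k + k * z ^ (q+k) * (z + q + r) ^ (k-1)) := by
  simp only [PP, derivative_sub, derivative_mul, derivative_pow, derivative_add, derivative_X,
    derivative_C, derivative_X_pow, derivative_sub, add_zero, sub_zero, mul_one,
    eval_sub, eval_add, eval_mul, eval_pow, eval_natCast, eval_X, eval_C]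
  push_cast
  ring

lemma root_ne (k q r : ℕ) (hk : 2 ≤ k) (hq : 3 ≤ q) (hr : 2*k < r) (z : ℂ)
    (h0 : (PP k q r).eval z = 0) : z ≠ 0 ∧ z ≠ q ∧ z ≠ -r ∧ z ≠ -(q:ℂ)-r := by
  have hqk : q + k ≠ 0 := by omega
  have hk0 : k ≠ 0 := by omega
  have hrne : (r:ℂ) ≠ 0 := Nat.cast_ne_zero.2 (by omega)
  have hqne : (q:ℂ) ≠ 0 := Nat.cast_ne_zero.2 (by omega)
  have h2qr : (q:ℂ) + q + r ≠ 0 := by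
    have : ((q:ℂ) + q + r) = ((q+q+r : ℕ):ℂ) := by push_cast; ring
    rw [this]; exact Nat.cast_ne_zero.2 (by omega)
  rw [evalPP] at h0
  refine ⟨?_, ?_, ?_, ?_⟩
  · rintro rfl
    simp only [zero_add, zero_sub, zero_pow hqk, zero_mul, sub_zero, mul_eq_zero,
      pow_eq_zero_iff hqk, pow_eq_zero_iff hk0, neg_eq_zero] at h0
    tauto
  · rintro rfl
    simp only [sub_self, zero_pow hk0, mul_zero, zero_sub, neg_eq_zero, mul_eq_zero,
      pow_eq_zero_iff hqk, pow_eq_zero_iff hk0] at h0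
    tauto
  · rintro rfl
    rw [show (-(r:ℂ) + r) = 0 by ring] at h0
    simp only [zero_pow hqk, zero_mul, zero_sub, neg_eq_zero, mul_eq_zero,
      pow_eq_zero_iff hqk, pow_eq_zero_iff hk0] at h0
    rcases h0 with h | h
    · exact hrne h
    · rw [show (-(r:ℂ) + q + r) = (q:ℂ) by ring] at h; exact hqne h
  · rintro rfl
    rw [show (-(q:ℂ) - r + q + r) = 0 by ring] at h0
    simp only [zero_pow hk0, mul_zero, sub_zero, mul_eq_zero,
      pow_eq_zero_iff hqk, pow_eq_zero_iff hk0] at h0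
    rcases h0 with h | h
    · exact hqne (by linear_combination -h)
    · exact h2qr (by linear_combination -h)

lemma mult_root_quad (k q r : ℕ) (hk : 2 ≤ k) (hq : 3 ≤ q) (hr : 2*k < r) (z : ℂ)
    (h0 : (PP k q r).eval z = 0) (h1 : (derivative (PP k q r)).eval z = 0) :
    ((r:ℂ) - 2*k) * (z^2 + r*z) = ((q:ℂ)+k)*r*(q+r) := by
  obtain ⟨hz0, hzq, hzr, hzqr⟩ := root_ne k q r hk hq hr z h0
  have hzq' : z - q ≠ 0 := sub_ne_zero.2 hzq
  have hzr' : z + r ≠ 0 := by intro h; exact hzr (by linear_combination h)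
  have hzqr' : z + q + r ≠ 0 := by intro h; exact hzqr (by linear_combination h)
  have hqne : (q:ℂ) ≠ 0 := Nat.cast_ne_zero.2 (by omega)
  set n := q + k - 1 with hn
  set m := k - 1 with hm
  have hqk : q + k = n + 1 := by omega
  have hkk : k = m + 1 := by omega
  have E1 : (z+r)^(n+1)*(z-q)^(m+1) = z^(n+1)*(z+q+r)^(m+1) := by
    have := evalPP k q r z
    rw [h0, hqk, hkk] at this
    linear_combination -this
  have E2 : ((q:ℂ)+k) * (z + r) ^ n * (z - q) ^ (m+1) + k * (z + r) ^ (n+1) * (z - q) ^ m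
      = ((q:ℂ)+k) * z ^ n * (z + q + r) ^ (m+1) + k * z ^ (n+1) * (z + q + r) ^ m := by
    have := evalPP_deriv k q r z
    rw [h1] at this
    simp only [show ∀ w:ℂ, w^(q+k-1) = w^n from fun w => by rw [← hn],
        show ∀ w:ℂ, w^(k-1) = w^m from fun w => by rw [← hm],
        show ∀ w:ℂ, w^(q+k) = w^(n+1) from fun w => by rw [hqk],
        show ∀ w:ℂ, w^k = w^(m+1) from fun w => by rw [← hkk]] at this
    linear_combination -this
  have hB : z^n * (z+q+r)^m ≠ 0 := mul_ne_zero (pow_ne_zero _ hz0) (pow_ne_zero _ hzqr')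
  have hBG : z^n*(z+q+r)^m *
      (z*(z+q+r)*(((q:ℂ)+k)*(z-q) + k*(z+r)) - (z+r)*(z-q)*(((q:ℂ)+k)*(z+q+r) + k*z)) = 0 := by
    linear_combination ((z+r)*(z-q)) * E2 - (((q:ℂ)+k)*(z-q) + k*(z+r)) * E1
  have hG : z*(z+q+r)*(((q:ℂ)+k)*(z-q) + k*(z+r)) - (z+r)*(z-q)*(((q:ℂ)+k)*(z+q+r) + k*z) = 0 :=
    by rcases mul_eq_zero.1 hBG with h | h
       · exact absurd h hB
       · exact h
  apply mul_left_cancel₀ hqne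
  linear_combination -hG

lemma log_ineq (k q r : ℕ) (hk : 2 ≤ k) (hq : 3 ≤ q) (hr : 2*k < r) (x : ℝ)
    (hx : (q:ℝ) < x) (hd : ((r:ℝ) - 2*k) * (x*(x+r)) = ((q:ℝ)+k)*r*(q+r)) :
    x^(q+k) * (x+q+r)^k < (x+r)^(q+k) * (x-q)^k := by
  have hQ : (0:ℝ) < q := by exact_mod_cast (by omega : 0 < q)
  have hK : (0:ℝ) < k := by exact_mod_cast (by omega : 0 < k)
  have hR : (0:ℝ) < r := by exact_mod_cast (by omega : 0 < r)
  have hRK : (0:ℝ) < (r:ℝ) - 2*k := by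
    have : (2*k:ℝ) < r := by exact_mod_cast hr
    linarith
  set Q := (q:ℝ); set K := (k:ℝ); set R := (r:ℝ)
  set h : ℝ → ℝ := fun y =>
    (Q+K)*(Real.log (y+R) - Real.log y) - K*(Real.log (y+Q+R) - Real.log (y-Q)) with hh
  have hx0 : 0 < x := lt_trans hQ hx
  have hderiv : ∀ y, Q < y →
      HasDerivAt h ((Q+K)*((y+R)⁻¹ - y⁻¹) - K*((y+Q+R)⁻¹ - (y-Q)⁻¹)) y := by
    intro y hy
    have hy0 : 0 < y := lt_trans hQ hy
    have l1 : HasDerivAt (fun y:ℝ => Real.log (y+R)) (y+R)⁻¹ y := by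
      simpa [one_div] using (((hasDerivAt_id y).add_const R).log (ne_of_gt (by simp only [id_eq]; linarith)))
    have l2 : HasDerivAt (fun y:ℝ => Real.log y) y⁻¹ y := by
      simpa [one_div] using ((hasDerivAt_id y).log (ne_of_gt (by simp only [id_eq]; linarith)))
    have l3 : HasDerivAt (fun y:ℝ => Real.log (y+Q+R)) (y+Q+R)⁻¹ y := by
      have := ((hasDerivAt_id y).add_const (Q+R)).log (ne_of_gt (show (0:ℝ) < id y + (Q+R) by simp only [id_eq]; linarith))
      simpa [one_div, add_assoc] using this
    have l4 : HasDerivAt (fun y:ℝ => Real.log (y-Q)) (y-Q)⁻¹ y := by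
      simpa [one_div] using (((hasDerivAt_id y).sub_const Q).log (ne_of_gt (by simp only [id_eq]; linarith)))
    exact ((l1.sub l2).const_mul (Q+K)).sub ((l3.sub l4).const_mul K)
  have hanti : StrictAntiOn h (Set.Ici x) := by
    apply strictAntiOn_of_deriv_neg (convex_Ici x)
    · intro y hy
      exact (hderiv y (lt_of_lt_of_le hx hy)).continuousAt.continuousWithinAt
    · intro y hy
      rw [interior_Ici] at hy
      have hxy : x < y := hy
      have hy0 : 0 < y := lt_trans hx0 hxy
      have hyQ : Q < y := lt_trans hx hxy
      rw [(hderiv y hyQ).deriv]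
      have e1 : (y+R)⁻¹ - y⁻¹ = -R/(y*(y+R)) := by
        rw [inv_sub_inv (ne_of_gt (by linarith : (0:ℝ) < y+R)) (ne_of_gt hy0),
          show y - (y+R) = -R by ring, show (y+R)*y = y*(y+R) by ring]
      have e2 : (y+Q+R)⁻¹ - (y-Q)⁻¹ = -(2*Q+R)/((y+Q+R)*(y-Q)) := by
        rw [inv_sub_inv (ne_of_gt (by linarith : (0:ℝ) < y+Q+R)) (ne_of_gt (by linarith)),
          show y - Q - (y+Q+R) = -(2*Q+R) by ring]
      rw [e1, e2]
      have hD1 : 0 < y*(y+R) := mul_pos hy0 (by linarith)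
      have hD2 : 0 < (y+Q+R)*(y-Q) := mul_pos (by linarith) (by linarith)
      have hdQ : Q*((R - 2*K) * (x*(x+R))) = Q*((Q+K)*R*(Q+R)) := by rw [hd]
      have key : (K*(2*Q+R)) * (y*(y+R)) < ((Q+K)*R) * ((y+Q+R)*(y-Q)) := by
        nlinarith [hdQ, mul_pos (mul_pos hQ hRK)
          (mul_pos (sub_pos.2 hxy) (show (0:ℝ) < y + x + R by linarith))]
      rw [show (Q+K)*(-R/(y*(y+R))) - K*(-(2*Q+R)/((y+Q+R)*(y-Q)))
          = (K*(2*Q+R))/((y+Q+R)*(y-Q)) - ((Q+K)*R)/(y*(y+R)) by ring]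
      rw [sub_neg, div_lt_div_iff₀ hD2 hD1]
      exact key
  have htend : Tendsto h atTop (nhds 0) := by
    have t1 : Tendsto (fun y:ℝ => Real.log (y+R) - Real.log y) atTop (nhds 0) := by
      have hdiv : Tendsto (fun y:ℝ => R / y) atTop (nhds 0) :=
        tendsto_const_nhds.div_atTop tendsto_id
      have base : Tendsto (fun y:ℝ => (y+R)/y) atTop (nhds 1) := by
        have h2 : Tendsto (fun y:ℝ => 1 + R/y) atTop (nhds (1+0)) :=
          tendsto_const_nhds.add hdiv
        rw [add_zero] at h2
        apply h2.congr'
        filter_upwards [eventually_gt_atTop 0] with y hy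
        field_simp
      have := (Real.continuousAt_log one_ne_zero).tendsto.comp base
      rw [Real.log_one] at this
      apply this.congr'
      filter_upwards [eventually_gt_atTop 0] with y hy
      simp only [Function.comp]
      rw [Real.log_div (ne_of_gt (by linarith)) (ne_of_gt hy)]
    have t2 : Tendsto (fun y:ℝ => Real.log (y+Q+R) - Real.log (y-Q)) atTop (nhds 0) := by
      have hsub : Tendsto (fun y:ℝ => y - Q) atTop atTop :=
        tendsto_atTop_add_const_right atTop (-Q) tendsto_id
      have hdiv : Tendsto (fun y:ℝ => (2*Q+R) / (y-Q)) atTop (nhds 0) :=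
        tendsto_const_nhds.div_atTop hsub
      have base : Tendsto (fun y:ℝ => (y+Q+R)/(y-Q)) atTop (nhds 1) := by
        have h2 : Tendsto (fun y:ℝ => 1 + (2*Q+R)/(y-Q)) atTop (nhds (1+0)) :=
          tendsto_const_nhds.add hdiv
        rw [add_zero] at h2
        apply h2.congr'
        filter_upwards [eventually_gt_atTop Q] with y hy
        have hne : y - Q ≠ 0 := ne_of_gt (by linarith)
        field_simp
        ring
      have := (Real.continuousAt_log one_ne_zero).tendsto.comp base
      rw [Real.log_one] at this
      apply this.congr'
      filter_upwards [eventually_gt_atTop Q] with y hy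
      simp only [Function.comp]
      rw [Real.log_div (ne_of_gt (by linarith)) (ne_of_gt (by linarith))]
    have := (t1.const_mul (Q+K)).sub (t2.const_mul K)
    simpa using this
  have hpos : 0 < h x := by
    have hx1 : h (x+1) < h x := hanti (Set.self_mem_Ici)
      (Set.mem_Ici.2 (by linarith)) (by linarith)
    have h0le : 0 ≤ h (x+1) := by
      apply le_of_tendsto htend
      filter_upwards [eventually_ge_atTop (x+1)] with y hy
      exact (hanti.antitoneOn (Set.mem_Ici.2 (by linarith)) (Set.mem_Ici.2 (by linarith)) hy)
    linarith
  have hxQ : 0 < x - Q := by linarith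
  have hxR : 0 < x + R := by linarith
  have hxQR : 0 < x + Q + R := by linarith
  simp only [hh] at hpos
  have loglt : Real.log (x^(q+k) * (x+Q+R)^k) < Real.log ((x+R)^(q+k) * (x-Q)^k) := by
    rw [Real.log_mul (by positivity) (by positivity),
        Real.log_mul (by positivity) (by positivity),
        Real.log_pow, Real.log_pow, Real.log_pow, Real.log_pow]
    push_cast
    linarith
  have := Real.exp_lt_exp.2 loglt
  rwa [Real.exp_log (by positivity), Real.exp_log (by positivity)] at this

lemma no_double_root (k q r : ℕ) (hk : 2 ≤ k) (hq : 3 ≤ q) (hr : 2*k < r) (z : ℂ)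
    (h0 : (PP k q r).eval z = 0) (h1 : (derivative (PP k q r)).eval z = 0) : False := by
  have hquad := mult_root_quad k q r hk hq hr z h0 h1
  have hQ : (0:ℝ) < q := by exact_mod_cast (by omega : 0 < q)
  have hK : (0:ℝ) < k := by exact_mod_cast (by omega : 0 < k)
  have hR : (0:ℝ) < r := by exact_mod_cast (by omega : 0 < r)
  have hRK : (0:ℝ) < (r:ℝ) - 2*k := by
    have : (2*k:ℝ) < r := by exact_mod_cast hr
    linarith
  set d : ℝ := ((q:ℝ)+k)*r*(q+r) / ((r:ℝ)-2*k) with hdd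
  have hd : ((r:ℝ)-2*k)*d = ((q:ℝ)+k)*r*(q+r) := by
    rw [hdd]; field_simp
  have hdpos : 0 < d := by
    rw [hdd]; positivity
  have hCne : ((r:ℂ) - 2*k) ≠ 0 := by
    intro h
    have : ((r:ℝ) - 2*k : ℝ) = 0 := by exact_mod_cast h
    linarith
  have hquad' : z^2 + (r:ℂ)*z = (d:ℂ) := by
    apply mul_left_cancel₀ hCne
    rw [hquad]
    have := congrArg (Complex.ofReal) hd
    push_cast at this ⊢
    linear_combination -this
  set e : ℝ := d + (r:ℝ)^2/4 with hee
  have hepos : 0 < e := by rw [hee]; positivity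
  set s : ℝ := Real.sqrt e with hss
  have hs2 : s^2 = e := Real.sq_sqrt hepos.le
  have hs2C : ((s:ℝ):ℂ)^2 = (d:ℂ) + (r:ℂ)^2/4 := by
    have : ((s^2 : ℝ) : ℂ) = ((e:ℝ):ℂ) := by exact_mod_cast congrArg Complex.ofReal hs2
    rw [hee] at this
    push_cast at this ⊢
    linear_combination this
  set x : ℝ := s - r/2 with hxx
  have hdx : ((r:ℝ) - 2*k) * (x*(x+r)) = ((q:ℝ)+k)*r*(q+r) := by
    have : x*(x+r) = s^2 - (r:ℝ)^2/4 := by rw [hxx]; ring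
    rw [this, hs2, hee, show d + (r:ℝ)^2/4 - (r:ℝ)^2/4 = d by ring]
    exact hd
  have hx : (q:ℝ) < x := by
    have hdq : (q:ℝ)*(q+r) < d := by
      rw [hdd, lt_div_iff₀ hRK]
      nlinarith [mul_pos (show (0:ℝ) < (q:ℝ)+r by linarith)
        (show (0:ℝ) < (k:ℝ)*r + 2*(k:ℝ)*q by positivity)]
    have hlt : ((q:ℝ) + r/2)^2 < e := by rw [hee]; nlinarith
    have := (Real.lt_sqrt (by positivity)).2 (by rw [← Real.sq_sqrt hepos.le] at hlt; nlinarith [hlt] : ((q:ℝ)+r/2)^2 < e)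
    rw [hxx]; rw [← hss] at *
    linarith [this]
  have hreal : (x:ℝ)^(q+k) * (x+(q:ℝ)+r)^k < (x+r)^(q+k) * (x-q)^k :=
    log_ineq k q r hk hq hr x hx hdx
  have hxne : (PP k q r).eval ((x:ℝ):ℂ) ≠ 0 := by
    rw [evalPP]
    intro h
    have : ((x+r)^(q+k) * (x-(q:ℝ))^k - x^(q+k) * (x+q+r)^k : ℝ) = 0 := by
      exact_mod_cast h
    nlinarith [hreal]
  have hz : z + (r:ℂ)/2 = s ∨ z + (r:ℂ)/2 = -s := by
    have hfact : (z + (r:ℂ)/2 - s) * (z + (r:ℂ)/2 + s) = 0 := by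
      linear_combination hquad' - hs2C
    rcases mul_eq_zero.1 hfact with h | h
    · left; linear_combination h
    · right; linear_combination h
  rcases hz with h | h
  · apply hxne
    rw [show ((x:ℝ):ℂ) = z by push_cast [hxx]; linear_combination -h]
    exact h0
  · apply hxne
    rw [show ((x:ℝ):ℂ) = -(r:ℂ) - z by push_cast [hxx]; linear_combination h]
    rw [evalPP_symm, h0, mul_zero]

lemma part1 (k q r : ℕ) (hk : 2 ≤ k) (hq : 3 ≤ q) (hr : 2*k < r) (z : ℂ) :
    (PP k q r).rootMultiplicity z ≤ 1 := by
  by_contra hle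
  push_neg at hle
  have hdvd : (X - C z)^2 ∣ PP k q r :=
    (pow_dvd_pow _ hle).trans (pow_rootMultiplicity_dvd _ z)
  obtain ⟨u, hu⟩ := hdvd
  have h0 : (PP k q r).eval z = 0 := by rw [hu]; simp
  have h1 : (derivative (PP k q r)).eval z = 0 := by
    rw [hu, derivative_mul, derivative_pow]
    simp
  exact no_double_root k q r hk hq hr z h0 h1

lemma natDegree_PP (k q r : ℕ) (hk : 2 ≤ k) (hq : 3 ≤ q) (hr : 2*k < r) :
    (PP k q r).natDegree = q + 2*k - 1 ∧ PP k q r ≠ 0 := by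
  set f : Polynomial ℂ := (X + C (r:ℂ)) ^ (q + k) * (X - C (q:ℂ)) ^ k with hff
  set g : Polynomial ℂ := X ^ (q + k) * (X + C ((q:ℂ) + r)) ^ k with hgg
  have hfm : f.Monic := ((monic_X_add_C _).pow _).mul ((monic_X_sub_C _).pow _)
  have hgm : g.Monic := (monic_X_pow _).mul ((monic_X_add_C _).pow _)
  have hdf : f.natDegree = q + 2*k := by
    rw [hff, Monic.natDegree_mul ((monic_X_add_C _).pow _) ((monic_X_sub_C _).pow _)]
    simp only [natDegree_pow, natDegree_X_add_C, natDegree_X_sub_C]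
    omega
  have hdg : g.natDegree = q + 2*k := by
    rw [hgg, Monic.natDegree_mul (monic_X_pow _) ((monic_X_add_C _).pow _)]
    simp only [natDegree_pow, natDegree_X_pow, natDegree_X_add_C, natDegree_X]
    omega
  have hnf : f.nextCoeff = (q+k) * (r:ℂ) + k * (-(q:ℂ)) := by
    rw [hff, show (X - C (q:ℂ)) = X + C (-(q:ℂ)) by rw [map_neg]; ring]
    rw [Monic.nextCoeff_mul ((monic_X_add_C _).pow _) ((monic_X_add_C _).pow _),
      Monic.nextCoeff_pow (monic_X_add_C _), Monic.nextCoeff_pow (monic_X_add_C _),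
      nextCoeff_X_add_C, nextCoeff_X_add_C]
    simp [nsmul_eq_mul]
  have hnX : (X:Polynomial ℂ).nextCoeff = 0 := by
    simpa using nextCoeff_X_add_C (0:ℂ)
  have hng : g.nextCoeff = k * ((q:ℂ) + r) := by
    rw [hgg, Monic.nextCoeff_mul (monic_X_pow _) ((monic_X_add_C _).pow _),
      Monic.nextCoeff_pow monic_X, Monic.nextCoeff_pow (monic_X_add_C _),
      nextCoeff_X_add_C, hnX]
    simp [nsmul_eq_mul]
    ring
  have hcoeff : (PP k q r).coeff (q + 2*k - 1) = (q:ℂ) * ((r:ℂ) - 2*k) := by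
    have h1 : f.coeff (q + 2*k - 1) = f.nextCoeff := by
      rw [nextCoeff_of_natDegree_pos (by omega : 0 < f.natDegree), hdf]
    have h2 : g.coeff (q + 2*k - 1) = g.nextCoeff := by
      rw [nextCoeff_of_natDegree_pos (by omega : 0 < g.natDegree), hdg]
    rw [show PP k q r = f - g from rfl, coeff_sub, h1, h2, hnf, hng]
    ring
  have hcne : (q:ℂ) * ((r:ℂ) - 2*k) ≠ 0 := by
    apply mul_ne_zero
    · exact_mod_cast (by omega : q ≠ 0)
    · intro h
      have h2 : ((r:ℝ) - 2*k : ℝ) = 0 := by exact_mod_cast h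
      have : (2*k:ℝ) < r := by exact_mod_cast hr
      linarith
  have hPne : PP k q r ≠ 0 := fun h => hcne (by rw [← hcoeff, h, coeff_zero])
  have hdegf : f.degree = ((q + 2*k : ℕ) : WithBot ℕ) := by
    rw [degree_eq_natDegree hfm.ne_zero, hdf]
  have hdegg : g.degree = ((q + 2*k : ℕ) : WithBot ℕ) := by
    rw [degree_eq_natDegree hgm.ne_zero, hdg]
  have hdeglt : (PP k q r).degree < ((q + 2*k : ℕ) : WithBot ℕ) := by
    rw [← hdegf]
    exact degree_sub_lt (hdegf.trans hdegg.symm) hfm.ne_zero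
      (by rw [hfm.leadingCoeff, hgm.leadingCoeff])
  have hlt : (PP k q r).natDegree < q + 2*k := (natDegree_lt_iff_degree_lt hPne).2 hdeglt
  have hge : q + 2*k - 1 ≤ (PP k q r).natDegree :=
    le_natDegree_of_ne_zero (hcoeff ▸ hcne)
  exact ⟨by omega, hPne⟩

noncomputable def Phi (k q r : ℕ) (t : ℝ) : ℝ :=
  q*π - 2*((q:ℝ)+k)*Real.arctan (2/(r:ℝ)*t) + 2*(k:ℝ)*Real.arctan (2/((r:ℝ)+2*q)*t)

lemma deriv_neg_helper (Kq Kk c₁ c₂ t : ℝ) (h1 : 0 < c₁) (h2 : 0 < c₂)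
    (e1 : Kk*c₂ < Kq*c₁) (e2 : Kk*c₁ < Kq*c₂) :
    -(2*Kq)*(c₁/(1+(c₁*t)^2)) + 2*Kk*(c₂/(1+(c₂*t)^2)) < 0 := by
  have hu : (0:ℝ) < 1+(c₁*t)^2 := by positivity
  have hv : (0:ℝ) < 1+(c₂*t)^2 := by positivity
  have key : 2*Kk*(c₂/(1+(c₂*t)^2)) < 2*Kq*(c₁/(1+(c₁*t)^2)) := by
    rw [mul_div_assoc', mul_div_assoc', div_lt_div_iff₀ hv hu]
    nlinarith [mul_le_mul_of_nonneg_right e2.le (show (0:ℝ) ≤ 2*c₁*c₂*t^2 by positivity)]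
  linarith

lemma phi_hasDeriv (k q r : ℕ) (t : ℝ) :
    HasDerivAt (Phi k q r)
      (-(2*((q:ℝ)+k)) * ((2/(r:ℝ))/(1+((2/(r:ℝ))*t)^2))
        + 2*(k:ℝ) * ((2/((r:ℝ)+2*q))/(1+((2/((r:ℝ)+2*q))*t)^2))) t := by
  have a1 : HasDerivAt (fun t:ℝ => Real.arctan (2/(r:ℝ)*t))
      ((2/(r:ℝ))/(1+((2/(r:ℝ))*t)^2)) t := by
    have := ((hasDerivAt_id t).const_mul (2/(r:ℝ))).arctan
    simpa [id_eq, mul_one, div_eq_mul_inv, mul_comm] using this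
  have a2 : HasDerivAt (fun t:ℝ => Real.arctan (2/((r:ℝ)+2*q)*t))
      ((2/((r:ℝ)+2*q))/(1+((2/((r:ℝ)+2*q))*t)^2)) t := by
    have := ((hasDerivAt_id t).const_mul (2/((r:ℝ)+2*q))).arctan
    simpa [id_eq, mul_one, div_eq_mul_inv, mul_comm] using this
  have := ((hasDerivAt_const t ((q:ℝ)*π)).sub (a1.const_mul (2*((q:ℝ)+k)))).add
    (a2.const_mul (2*(k:ℝ)))
  exact this.congr_deriv (by ring)

lemma phi_strictAnti (k q r : ℕ) (hk : 2 ≤ k) (hq : 3 ≤ q) (hr : 2*k < r) :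
    StrictAnti (Phi k q r) := by
  have hQ : (0:ℝ) < q := by exact_mod_cast (by omega : 0 < q)
  have hK : (0:ℝ) < k := by exact_mod_cast (by omega : 0 < k)
  have hR : (0:ℝ) < r := by exact_mod_cast (by omega : 0 < r)
  have hRK : (0:ℝ) < (r:ℝ) - 2*k := by
    have : (2*k:ℝ) < r := by exact_mod_cast hr
    linarith
  apply strictAnti_of_deriv_neg
  intro t
  rw [(phi_hasDeriv k q r t).deriv]
  apply deriv_neg_helper _ _ _ _ _ (by positivity) (by positivity)
  · rw [mul_div_assoc', mul_div_assoc', div_lt_div_iff₀ (by positivity) (by positivity)]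
    nlinarith
  · rw [mul_div_assoc', mul_div_assoc', div_lt_div_iff₀ (by positivity) (by positivity)]
    nlinarith

lemma phi_cont (k q r : ℕ) : Continuous (Phi k q r) := by
  apply continuous_iff_continuousAt.2
  intro t
  exact (phi_hasDeriv k q r t).continuousAt

lemma phi_tendsto_top (k q r : ℕ) (hq : 3 ≤ q) (hr : 5 ≤ r) :
    Tendsto (Phi k q r) atTop (nhds 0) := by
  have hc1 : (0:ℝ) < 2/(r:ℝ) := by
    have : (0:ℝ) < r := by exact_mod_cast (by omega : 0 < r)
    positivity
  have hc2 : (0:ℝ) < 2/((r:ℝ)+2*q) := by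
    have h1 : (0:ℝ) < r := by exact_mod_cast (by omega : 0 < r)
    have h2 : (0:ℝ) ≤ q := Nat.cast_nonneg q
    positivity
  have hX : Tendsto (fun t:ℝ => Real.arctan (2/(r:ℝ)*t)) atTop (nhds (π/2)) :=
    (Real.tendsto_arctan_atTop.mono_right nhdsWithin_le_nhds).comp
      (tendsto_id.const_mul_atTop hc1)
  have hY : Tendsto (fun t:ℝ => Real.arctan (2/((r:ℝ)+2*q)*t)) atTop (nhds (π/2)) :=
    (Real.tendsto_arctan_atTop.mono_right nhdsWithin_le_nhds).comp
      (tendsto_id.const_mul_atTop hc2)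
  have := ((tendsto_const_nhds (x := (q:ℝ)*π) (f := atTop)).sub
    (hX.const_mul (2*((q:ℝ)+k)))).add (hY.const_mul (2*(k:ℝ)))
  have h0 : (q:ℝ)*π - 2*((q:ℝ)+k)*(π/2) + 2*(k:ℝ)*(π/2) = 0 := by ring
  rw [h0] at this
  exact this

lemma phi_tendsto_bot (k q r : ℕ) (hq : 3 ≤ q) (hr : 5 ≤ r) :
    Tendsto (Phi k q r) atBot (nhds (2*π*q)) := by
  have hc1 : (0:ℝ) < 2/(r:ℝ) := by
    have : (0:ℝ) < r := by exact_mod_cast (by omega : 0 < r)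
    positivity
  have hc2 : (0:ℝ) < 2/((r:ℝ)+2*q) := by
    have h1 : (0:ℝ) < r := by exact_mod_cast (by omega : 0 < r)
    have h2 : (0:ℝ) ≤ q := Nat.cast_nonneg q
    positivity
  have hX : Tendsto (fun t:ℝ => Real.arctan (2/(r:ℝ)*t)) atBot (nhds (-(π/2))) :=
    (Real.tendsto_arctan_atBot.mono_right nhdsWithin_le_nhds).comp
      (tendsto_id.const_mul_atBot hc1)
  have hY : Tendsto (fun t:ℝ => Real.arctan (2/((r:ℝ)+2*q)*t)) atBot (nhds (-(π/2))) :=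
    (Real.tendsto_arctan_atBot.mono_right nhdsWithin_le_nhds).comp
      (tendsto_id.const_mul_atBot hc2)
  have := ((tendsto_const_nhds (x := (q:ℝ)*π) (f := atBot)).sub
    (hX.const_mul (2*((q:ℝ)+k)))).add (hY.const_mul (2*(k:ℝ)))
  have h0 : (q:ℝ)*π - 2*((q:ℝ)+k)*(-(π/2)) + 2*(k:ℝ)*(-(π/2)) = 2*π*q := by ring
  rw [h0] at this
  exact this

lemma strictAnti_lt_limit {f : ℝ → ℝ} (hf : StrictAnti f) {L : ℝ}
    (h : Tendsto f atBot (nhds L)) (t : ℝ) : f t < L := by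
  have h1 : f t < f (t-1) := hf (by linarith)
  have h2 : f (t-1) ≤ L := by
    apply ge_of_tendsto h
    filter_upwards [eventually_le_atBot (t-1)] with s hs
    exact hf.antitone hs
  linarith

lemma strictAnti_gt_limit {f : ℝ → ℝ} (hf : StrictAnti f) {L : ℝ}
    (h : Tendsto f atTop (nhds L)) (t : ℝ) : L < f t := by
  have h1 : f (t+1) < f t := hf (by linarith)
  have h2 : L ≤ f (t+1) := by
    apply le_of_tendsto h
    filter_upwards [eventually_ge_atTop (t+1)] with s hs
    exact hf.antitone hs
  linarith

lemma phi_exists (k q r : ℕ) (hk : 2 ≤ k) (hq : 3 ≤ q) (hr : 2*k < r) (y : ℝ)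
    (hy1 : 0 < y) (hy2 : y < 2*π*q) : ∃ t, Phi k q r t = y := by
  have hanti := phi_strictAnti k q r hk hq hr
  obtain ⟨a, ha⟩ := ((phi_tendsto_bot k q r hq (by omega)).eventually
    (eventually_gt_nhds hy2)).exists
  obtain ⟨b, hb⟩ := ((phi_tendsto_top k q r hq (by omega)).eventually
    (eventually_lt_nhds hy1)).exists
  have hab : a ≤ b := by
    by_contra hba
    push_neg at hba
    exact absurd (hanti hba) (by linarith)
  have := intermediate_value_Icc' hab (phi_cont k q r).continuousOn
  obtain ⟨t, _, ht⟩ := this (Set.mem_Icc.2 ⟨hb.le, ha.le⟩)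
  exact ⟨t, ht⟩

lemma Phi_def (k q r : ℕ) (t : ℝ) : Phi k q r t =
  q*π - 2*((q:ℝ)+k)*Real.arctan (2/(r:ℝ)*t) + 2*(k:ℝ)*Real.arctan (2/((r:ℝ)+2*q)*t) := rfl

lemma polar_pos (x t : ℝ) (hx : 0 < x) :
    (⟨x, t⟩ : ℂ) = (Real.sqrt (x^2 + t^2) : ℂ) *
      Complex.exp ((Real.arctan (t/x) : ℂ) * Complex.I) := by
  have hs : Real.sqrt (x^2+t^2) = x * Real.sqrt (1 + (t/x)^2) := by
    rw [← Real.sqrt_sq hx.le, ← Real.sqrt_mul (sq_nonneg x)]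
    rw [Real.sqrt_sq hx.le]
    congr 1
    field_simp
  have hsne : Real.sqrt (1 + (t/x)^2) ≠ 0 := by positivity
  apply Complex.ext
  · simp only [Complex.mul_re, Complex.ofReal_re, Complex.ofReal_im,
      Complex.exp_ofReal_mul_I_re, Complex.exp_ofReal_mul_I_im, zero_mul, sub_zero]
    rw [Real.cos_arctan, hs]
    field_simp
  · simp only [Complex.mul_im, Complex.ofReal_re, Complex.ofReal_im,
      Complex.exp_ofReal_mul_I_re, Complex.exp_ofReal_mul_I_im, zero_mul, add_zero]
    rw [Real.sin_arctan, hs]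
    field_simp

lemma polar_neg (x t : ℝ) (hx : x < 0) :
    (⟨x, t⟩ : ℂ) = (Real.sqrt (x^2 + t^2) : ℂ) *
      Complex.exp ((↑(π - Real.arctan (t/(-x))) : ℂ) * Complex.I) := by
  have h1 := polar_pos (-x) (-t) (by linarith)
  have h2 : (⟨x, t⟩ : ℂ) = -(⟨-x, -t⟩ : ℂ) := by
    apply Complex.ext <;> simp
  have h3 : ((-x)^2 + (-t)^2 : ℝ) = x^2 + t^2 := by ring
  have h4 : (-t)/(-x) = -(t/(-x)) := by ring
  have h4' : Real.arctan ((-t)/(-x)) = -Real.arctan (t/(-x)) := by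
    rw [h4, Real.arctan_neg]
  rw [h2, h1, h3, h4']
  have h5 : Complex.exp ((↑(π - Real.arctan (t/(-x))) : ℂ) * Complex.I)
      = Complex.exp (↑π * Complex.I) * Complex.exp ((↑(-Real.arctan (t/(-x))) : ℂ) * Complex.I) := by
    rw [← Complex.exp_add]
    congr 1
    push_cast
    ring
  rw [h5, Complex.exp_pi_mul_I]
  push_cast
  ring

lemma hpow_aux (ρ θ : ℝ) (n : ℕ) : ((ρ:ℂ) * Complex.exp ((θ:ℂ)*Complex.I))^n
    = ((ρ^n : ℝ):ℂ) * Complex.exp ((((n:ℝ)*θ : ℝ):ℂ)*Complex.I) := by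
  rw [mul_pow, ← Complex.exp_nat_mul]
  push_cast
  ring_nf

lemma hmul_aux (θ₁ θ₂ : ℝ) : Complex.exp ((θ₁:ℂ)*Complex.I) * Complex.exp ((θ₂:ℂ)*Complex.I)
    = Complex.exp (((θ₁+θ₂ : ℝ):ℂ)*Complex.I) := by
  rw [← Complex.exp_add]
  push_cast
  ring_nf

lemma root_char (k q r : ℕ) (hk : 2 ≤ k) (hq : 3 ≤ q) (hr : 2*k < r) (t : ℝ) :
    ((PP k q r).eval (⟨-(r:ℝ)/2, t⟩ : ℂ) = 0) ↔ (∃ n : ℤ, Phi k q r t = 2*π*n) := by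
  have hQ : (0:ℝ) < q := by exact_mod_cast (by omega : 0 < q)
  have hR : (0:ℝ) < r := by exact_mod_cast (by omega : 0 < r)
  set z : ℂ := (⟨-(r:ℝ)/2, t⟩ : ℂ) with hz
  set a : ℝ := Real.arctan (2/(r:ℝ)*t) with ha
  set b : ℝ := Real.arctan (2/((r:ℝ)+2*q)*t) with hb
  set ρ₁ : ℝ := Real.sqrt (((r:ℝ)/2)^2 + t^2) with hρ₁
  set ρ₂ : ℝ := Real.sqrt (((r:ℝ)/2+q)^2 + t^2) with hρ₂
  have hρ₁p : 0 < ρ₁ := Real.sqrt_pos.2 (by positivity)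
  have hρ₂p : 0 < ρ₂ := Real.sqrt_pos.2 (by positivity)
  -- the four polar forms
  have e1 : z = (ρ₁:ℂ) * Complex.exp ((↑(π - a) : ℂ) * Complex.I) := by
    rw [hz, polar_neg (-(r:ℝ)/2) t (by linarith)]
    rw [show (-(r:ℝ)/2)^2 = ((r:ℝ)/2)^2 by ring,
      show t/(-(-(r:ℝ)/2)) = 2/(r:ℝ)*t by field_simp]
  have e2 : z + r = (ρ₁:ℂ) * Complex.exp ((a : ℂ) * Complex.I) := by
    have : z + r = (⟨(r:ℝ)/2, t⟩ : ℂ) := by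
      apply Complex.ext <;> simp [hz] <;> ring
    rw [this, polar_pos ((r:ℝ)/2) t (by linarith),
      show t/((r:ℝ)/2) = 2/(r:ℝ)*t by field_simp]
  have e3 : z - q = (ρ₂:ℂ) * Complex.exp ((↑(π - b) : ℂ) * Complex.I) := by
    have h1 : z - q = (⟨-(r:ℝ)/2-q, t⟩ : ℂ) := by
      apply Complex.ext <;> simp [hz]
    rw [h1, polar_neg (-(r:ℝ)/2-q) t (by linarith)]
    rw [show (-(r:ℝ)/2-q)^2 = ((r:ℝ)/2+q)^2 by ring,
      show t/(-(-(r:ℝ)/2-q)) = 2/((r:ℝ)+2*q)*t by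
        rw [show -(-(r:ℝ)/2-q) = (r:ℝ)/2+q by ring]; field_simp]
  have e4 : z + q + r = (ρ₂:ℂ) * Complex.exp ((b : ℂ) * Complex.I) := by
    have h1 : z + q + r = (⟨(r:ℝ)/2+q, t⟩ : ℂ) := by
      apply Complex.ext <;> simp [hz] <;> ring
    rw [h1, polar_pos ((r:ℝ)/2+q) t (by positivity),
      show t/((r:ℝ)/2+q) = 2/((r:ℝ)+2*q)*t by field_simp]
  -- root iff product equation
  have hroot : ((PP k q r).eval z = 0) ↔
      (z + r)^(q+k) * (z - q)^k = z^(q+k) * (z + q + r)^k := by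
    rw [evalPP]; exact sub_eq_zero
  set u₁ : ℝ := ((q+k : ℕ):ℝ)*a + ((k:ℕ):ℝ)*(π - b) with hu₁
  set u₂ : ℝ := ((q+k : ℕ):ℝ)*(π - a) + ((k:ℕ):ℝ)*b with hu₂
  set M : ℂ := ((ρ₁^(q+k) : ℝ):ℂ) * ((ρ₂^k : ℝ):ℂ) with hM
  have hMne : M ≠ 0 := by
    rw [hM]
    apply mul_ne_zero <;> exact_mod_cast (by positivity : ¬ _ = (0:ℝ))
  have hA : (z + r)^(q+k) * (z - q)^k = M * Complex.exp ((u₁:ℂ)*Complex.I) := by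
    rw [e2, e3, hpow_aux, hpow_aux, mul_mul_mul_comm, hmul_aux, hM, hu₁]
  have hB : z^(q+k) * (z + q + r)^k = M * Complex.exp ((u₂:ℂ)*Complex.I) := by
    rw [e4, e1, hpow_aux, hpow_aux, mul_mul_mul_comm, hmul_aux, hM, hu₂]
  rw [hroot, hA, hB, mul_right_inj' hMne]
  have step2 : (Complex.exp ((u₁:ℂ)*Complex.I) = Complex.exp ((u₂:ℂ)*Complex.I))
      ↔ Complex.exp ((↑(u₁-u₂):ℂ)*Complex.I) = 1 := by
    rw [show ((↑(u₁-u₂):ℂ))*Complex.I = (u₁:ℂ)*Complex.I - (u₂:ℂ)*Complex.I by push_cast; ring,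
      Complex.exp_sub, div_eq_one_iff_eq (Complex.exp_ne_zero _)]
  rw [step2, Complex.exp_eq_one_iff]
  constructor
  · rintro ⟨n, hn⟩
    refine ⟨-n, ?_⟩
    have h2 : ((u₁ - u₂ : ℝ):ℂ) = ((n:ℝ)*(2*π) : ℝ) := by
      apply mul_right_cancel₀ Complex.I_ne_zero
      rw [hn]; push_cast; ring
    have h3 : u₁ - u₂ = (n:ℝ)*(2*π) := by exact_mod_cast h2
    rw [Phi_def]
    rw [hu₁, hu₂] at h3
    push_cast at h3 ⊢
    linarith
  · rintro ⟨n, hn⟩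
    refine ⟨-n, ?_⟩
    have h3 : u₁ - u₂ = ((-n : ℤ):ℝ)*(2*π) := by
      rw [hu₁, hu₂]
      rw [Phi_def] at hn
      push_cast at hn ⊢
      linarith
    rw [show ((↑(u₁-u₂):ℂ)) = ((-n : ℤ):ℂ)*(2*(π:ℂ)) by exact_mod_cast congrArg Complex.ofReal h3]
    push_cast
    ring

theorem stmt_19 (k q r : ℕ) (hk : 2 ≤ k) (hq : 3 ≤ q) (hr : 2 * k < r) :
    (∀ z : ℂ, ((X + C (r : ℂ)) ^ (q + k) * (X - C (q : ℂ)) ^ k -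
        X ^ (q + k) * (X + C ((q : ℂ) + r)) ^ k).rootMultiplicity z ≤ 1) ∧
    {z : ℂ | ((X + C (r : ℂ)) ^ (q + k) * (X - C (q : ℂ)) ^ k -
        X ^ (q + k) * (X + C ((q : ℂ) + r)) ^ k).IsRoot z ∧ -(r : ℝ) / 2 < z.re}.ncard = k := by
  classical
  have hPP : (X + C (r : ℂ)) ^ (q + k) * (X - C (q : ℂ)) ^ k -
      X ^ (q + k) * (X + C ((q : ℂ) + r)) ^ k = PP k q r := rfl
  rw [hPP]
  obtain ⟨hdeg, hPne⟩ := natDegree_PP k q r hk hq hr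
  have hπ : (0:ℝ) < π := Real.pi_pos
  have hanti := phi_strictAnti k q r hk hq hr
  have hQR : (0:ℝ) < q := by exact_mod_cast (by omega : 0 < q)
  have hphi_lt : ∀ t, Phi k q r t < 2*π*q :=
    strictAnti_lt_limit hanti (phi_tendsto_bot k q r hq (by omega))
  have hphi_pos : ∀ t, 0 < Phi k q r t :=
    fun t => strictAnti_gt_limit hanti (phi_tendsto_top k q r hq (by omega)) t
  constructor
  · exact part1 k q r hk hq hr
  set T := (PP k q r).roots.toFinset with hT
  have hnodup : (PP k q r).roots.Nodup := by
    rw [Multiset.nodup_iff_count_le_one]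
    intro z
    rw [count_roots]
    exact part1 k q r hk hq hr z
  have hcardT : T.card = q + 2*k - 1 := by
    rw [hT, Multiset.toFinset_card_of_nodup hnodup, ← hdeg]
    exact (splits_iff_card_roots.1 (IsAlgClosed.splits _))
  have hmemT : ∀ z, z ∈ T ↔ (PP k q r).IsRoot z := fun z => by
    rw [hT, Multiset.mem_toFinset, mem_roots hPne]
  set L := T.filter (fun z => z.re = -(r:ℝ)/2) with hL
  set S := T.filter (fun z => -(r:ℝ)/2 < z.re) with hS
  set S' := T.filter (fun z => z.re < -(r:ℝ)/2) with hS'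
  -- symmetry of roots
  have hsymm : ∀ z : ℂ, (PP k q r).IsRoot z → (PP k q r).IsRoot (-(r:ℂ) - z) := by
    intro z hz
    have := evalPP_symm k q r z
    rw [IsRoot] at hz ⊢
    rw [this, hz, mul_zero]
  have hre_symm : ∀ z : ℂ, (-(r:ℂ) - z).re = -(r:ℝ) - z.re := by
    intro z
    simp [Complex.sub_re, Complex.neg_re, Complex.natCast_re]
  have hSS' : S.card = S'.card := by
    apply Finset.card_bij' (fun z _ => -(r:ℂ) - z) (fun z _ => -(r:ℂ) - z)
    · intro z hz
      rw [hS, Finset.mem_filter] at hz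
      rw [hS', Finset.mem_filter]
      refine ⟨(hmemT _).2 (hsymm z ((hmemT z).1 hz.1)), ?_⟩
      rw [hre_symm]
      have := hz.2
      linarith
    · intro z hz
      rw [hS', Finset.mem_filter] at hz
      rw [hS, Finset.mem_filter]
      refine ⟨(hmemT _).2 (hsymm z ((hmemT z).1 hz.1)), ?_⟩
      rw [hre_symm]
      have := hz.2
      linarith
    · intro z _; ring
    · intro z _; ring
  -- partition
  have hdisj1 : Disjoint L S := by
    rw [Finset.disjoint_left]
    intro z h1 h2
    rw [hL, Finset.mem_filter] at h1
    rw [hS, Finset.mem_filter] at h2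
    linarith [h1.2, h2.2]
  have hdisj2 : Disjoint (L ∪ S) S' := by
    rw [Finset.disjoint_left]
    intro z h1 h2
    rw [hS', Finset.mem_filter] at h2
    rw [Finset.mem_union, hL, hS, Finset.mem_filter, Finset.mem_filter] at h1
    rcases h1 with h | h
    · linarith [h.2, h2.2]
    · linarith [h.2, h2.2]
  have hunion : L ∪ S ∪ S' = T := by
    ext z
    rw [Finset.mem_union, Finset.mem_union, hL, hS, hS',
      Finset.mem_filter, Finset.mem_filter, Finset.mem_filter]
    constructor
    · rintro ((h | h) | h) <;> exact h.1
    · intro hz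
      rcases lt_trichotomy (z.re) (-(r:ℝ)/2) with h | h | h
      · right; exact ⟨hz, h⟩
      · left; left; exact ⟨hz, h⟩
      · left; right; exact ⟨hz, h⟩
  have hsplit : T.card = L.card + S.card + S'.card := by
    rw [← hunion, Finset.card_union_of_disjoint hdisj2, Finset.card_union_of_disjoint hdisj1]
  -- line roots count
  have hex : ∀ m : ℕ, 1 ≤ m → m ≤ q-1 → ∃ t, Phi k q r t = 2*π*m := by
    intro m h1 h2
    apply phi_exists k q r hk hq hr
    · have : (1:ℝ) ≤ m := by exact_mod_cast h1
      nlinarith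
    · have : (m:ℝ) < q := by exact_mod_cast (by omega : m < q)
      nlinarith
  have hex' : ∀ m : ℕ, ∃ t, (1 ≤ m ∧ m ≤ q-1) → Phi k q r t = 2*π*m := by
    intro m
    by_cases h : 1 ≤ m ∧ m ≤ q-1
    · obtain ⟨t, ht⟩ := hex m h.1 h.2
      exact ⟨t, fun _ => ht⟩
    · exact ⟨0, fun hc => absurd hc h⟩
  choose g hg using hex'
  have hLcard : L.card = q - 1 := by
    have : (Finset.Icc 1 (q-1)).card = L.card := by
      apply Finset.card_bij (fun m _ => (⟨-(r:ℝ)/2, g m⟩ : ℂ))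
      · intro m hm
        rw [Finset.mem_Icc] at hm
        rw [hL, Finset.mem_filter]
        constructor
        · rw [hmemT]
          rw [IsRoot]
          rw [root_char k q r hk hq hr (g m)]
          exact ⟨(m:ℤ), by rw [hg m hm]; push_cast; ring⟩
        · rfl
      · intro m1 hm1 m2 hm2 heq
        rw [Finset.mem_Icc] at hm1 hm2
        have him : g m1 = g m2 := congrArg Complex.im heq
        have : Phi k q r (g m1) = Phi k q r (g m2) := by rw [him]
        rw [hg m1 hm1, hg m2 hm2] at this
        have : (m1:ℝ) = m2 := by
          have h2 : 2*π*(m1:ℝ) = 2*π*m2 := this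
          field_simp at h2
          tauto
        exact_mod_cast this
      · intro z hz
        rw [hL, Finset.mem_filter] at hz
        have hzform : z = (⟨-(r:ℝ)/2, z.im⟩ : ℂ) := by
          apply Complex.ext
          · exact hz.2
          · rfl
        have hroot : (PP k q r).eval (⟨-(r:ℝ)/2, z.im⟩ : ℂ) = 0 := by
          rw [← hzform]
          exact (hmemT z).1 hz.1
        obtain ⟨n, hn⟩ := (root_char k q r hk hq hr z.im).1 hroot
        have hn1 : 0 < n := by
          have := hphi_pos z.im
          rw [hn] at this
          have : (0:ℝ) < n := by nlinarith
          exact_mod_cast this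
        have hn2 : n < q := by
          have := hphi_lt z.im
          rw [hn] at this
          have : (n:ℝ) < q := by nlinarith
          exact_mod_cast this
        refine ⟨n.toNat, Finset.mem_Icc.2 ⟨by omega, by omega⟩, ?_⟩
        have hmn : ((n.toNat : ℕ) : ℝ) = (n:ℝ) := by
          exact_mod_cast congrArg (fun j : ℤ => (j:ℝ)) (Int.toNat_of_nonneg hn1.le)
        have : Phi k q r (g n.toNat) = Phi k q r z.im := by
          rw [hg n.toNat ⟨by omega, by omega⟩, hn, hmn]
        have him := hanti.injective this
        rw [hzform]
        apply Complex.ext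
        · rfl
        · exact him
    rw [Nat.card_Icc] at this
    omega
  -- final count
  have hScard : S.card = k := by omega
  have hset : {z : ℂ | (PP k q r).IsRoot z ∧ -(r:ℝ)/2 < z.re} = (↑S : Set ℂ) := by
    ext z
    rw [Set.mem_setOf_eq, Finset.mem_coe, hS, Finset.mem_filter, hmemT z]
  rw [hset, Set.ncard_coe_finset, hScard]
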